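/- Let D : D(D) ⊂ H₁ → H₂ be closed and densely defined, and let 𝐃(z) = [[z, D^*],[D, −conj(z)]] on E₀ = H₁ ⊕ H₂. Then sup over |z| ≥ 1 of |z|·‖𝐃(z)^{-1}‖_{L(E₀)} is finite. -/
import Mathlib

open scoped ComplexInnerProductSpace


/-- The block operator `𝐃(z) = [[z, D^*],[D, −conj z]]`. -/
noncomputable def blockFun {H₁ H₂ : Type*} [NormedAddCommGroup H₁] [InnerProductSpace ℂ H₁]
    [NormedAddCommGroup H₂] [InnerProductSpace ℂ H₂] [CompleteSpace H₁] [CompleteSpace H₂]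
    (D : H₁ →ₗ.[ℂ] H₂) (z : ℂ) (u : D.domain) (v : D.adjoint.domain) : H₁ × H₂ :=
  (z • (u : H₁) + D.adjoint v, D u - starRingEnd ℂ z • (v : H₂))

/-- Let `D : D(D) ⊂ H₁ → H₂` be closed and densely defined, and let
`𝐃(z) = [[z, D^*],[D, −conj z]]` on `E₀ = H₁ ⊕ H₂` (with the Hilbert space norm
`‖(a, b)‖² = ‖a‖² + ‖b‖²`).  Then `sup_{|z| ≥ 1} |z|·‖𝐃(z)⁻¹‖ < ∞`; equivalently there is a
constant `C` such that `|z|·‖w‖ ≤ C·‖𝐃(z) w‖` for all `|z| ≥ 1` and all `w ∈ D(D) ⊕ D(D^*)`. -/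
theorem stmt13 {H₁ H₂ : Type*} [NormedAddCommGroup H₁] [InnerProductSpace ℂ H₁]
    [NormedAddCommGroup H₂] [InnerProductSpace ℂ H₂] [CompleteSpace H₁] [CompleteSpace H₂]
    (D : H₁ →ₗ.[ℂ] H₂)
    (hDense : Dense (D.domain : Set H₁))
    (hDense' : Dense (D.adjoint.domain : Set H₂))
    (hClosed : D.IsClosed) :
    ∃ C : ℝ, ∀ z : ℂ, 1 ≤ ‖z‖ → ∀ (u : D.domain) (v : D.adjoint.domain),
      ‖z‖ * Real.sqrt (‖(u : H₁)‖ ^ 2 + ‖(v : H₂)‖ ^ 2) ≤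
        C * Real.sqrt (‖(blockFun D z u v).1‖ ^ 2 + ‖(blockFun D z u v).2‖ ^ 2) := by

  refine ⟨1, fun z _ u v => ?_⟩
  have hadj : ⟪((u : H₁)), (D.adjoint v : H₁)⟫ = ⟪(D u : H₂), (v : H₂)⟫ := by
    rw [← inner_conj_symm, (D.adjoint_isFormalAdjoint hDense) v u, inner_conj_symm]
  have h1 : ‖(blockFun D z u v).1‖ ^ 2 + ‖(blockFun D z u v).2‖ ^ 2
      = ‖z‖ ^ 2 * ‖(u : H₁)‖ ^ 2 + ‖(D.adjoint v : H₁)‖ ^ 2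
        + (‖(D u : H₂)‖ ^ 2 + ‖z‖ ^ 2 * ‖(v : H₂)‖ ^ 2) := by
    simp only [blockFun]
    rw [norm_add_sq (𝕜 := ℂ), norm_sub_sq (𝕜 := ℂ), inner_smul_left, inner_smul_right, hadj,
      norm_smul, norm_smul]
    have : ‖starRingEnd ℂ z‖ = ‖z‖ := by simp
    rw [this]
    ring
  have hle : ‖z‖ ^ 2 * (‖(u : H₁)‖ ^ 2 + ‖(v : H₂)‖ ^ 2)
      ≤ ‖(blockFun D z u v).1‖ ^ 2 + ‖(blockFun D z u v).2‖ ^ 2 := by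
    rw [h1]; nlinarith [norm_nonneg (D.adjoint v : H₁), norm_nonneg (D u : H₂),
      sq_nonneg ‖(D.adjoint v : H₁)‖, sq_nonneg ‖(D u : H₂)‖]
  rw [one_mul]
  calc ‖z‖ * Real.sqrt (‖(u : H₁)‖ ^ 2 + ‖(v : H₂)‖ ^ 2)
      = Real.sqrt (‖z‖ ^ 2 * (‖(u : H₁)‖ ^ 2 + ‖(v : H₂)‖ ^ 2)) := by
        rw [Real.sqrt_mul (by positivity), Real.sqrt_sq (norm_nonneg z)]
    _ ≤ _ := Real.sqrt_le_sqrt hle
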